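/- Let n≥1 be an integer, A ∈ ℂ with A ≠ 0, and λ_1,…,λ_n ∈ ℂ with λ_k² ≠ λ_ℓ² for all k ≠ ℓ. Then (1/(2i)^n) Σ_{P∈S_n} Σ_{ε∈{±1}^n} (Π_{p=1}^n ε_p) · A[ε_1 λ_{P(1)}, ε_2 λ_{P(2)}, …, ε_n λ_{P(n)}] = (n!/A^n) Π_{j=1}^n λ_j. (This is the evaluation Ψ_μ(0,…,0) of the half-space Bethe wavefunction with all coordinates at the boundary.) -/

import Mathlib

open Complex Finset

/-- The sign `±1 ∈ ℂ` associated to a boolean. -/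
def pmSign (b : Bool) : ℂ := if b then 1 else -1

/-- The half-space Bethe amplitude
`A[μ₁,…,μ_n] = Π_{k<ℓ} (1 + i/(μ_ℓ − μ_k))(1 + i/(μ_ℓ + μ_k)) · Π_ℓ (1 + i μ_ℓ/A)`. -/
noncomputable def betheAmp {n : ℕ} (A : ℂ) (μ : Fin n → ℂ) : ℂ :=
  (∏ p ∈ Finset.univ.filter (fun p : Fin n × Fin n => p.1 < p.2),
    (1 + I / (μ p.2 - μ p.1)) * (1 + I / (μ p.2 + μ p.1))) *
  ∏ l : Fin n, (1 + I * μ l / A)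

open Polynomial

namespace BetheAux

/-- pair of polynomials (σ_m, δ_m) with
 (2iλ-1)^m + (-2iλ-1)^m = σ_m(λ²),  (2iλ-1)^m - (-2iλ-1)^m = 2iλ δ_m(λ²). -/
noncomputable def sd : ℕ → Polynomial ℂ × Polynomial ℂ
  | 0 => (2, 0)
  | (m+1) => (-(sd m).1 - (C 4 * X) * (sd m).2, (sd m).1 - (sd m).2)

lemma sd_eval (m : ℕ) (l : ℂ) :
    (2*I*l - 1)^m + (-(2*I*l) - 1)^m = ((sd m).1).eval (l^2)
    ∧ (2*I*l - 1)^m - (-(2*I*l) - 1)^m = 2*I*l * ((sd m).2).eval (l^2) := by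
  induction m with
  | zero => simp [sd]; norm_num
  | succ m ih =>
    obtain ⟨h1, h2⟩ := ih
    constructor
    · have : (2*I*l - 1)^(m+1) + (-(2*I*l) - 1)^(m+1)
          = -((2*I*l - 1)^m + (-(2*I*l) - 1)^m)
            + (2*I*l) * ((2*I*l - 1)^m - (-(2*I*l) - 1)^m) := by ring
      rw [this, h1, h2, sd]
      simp only [eval_sub, eval_neg, eval_mul, eval_C, eval_X]
      have hI : I^2 = -1 := I_sq
      ring_nf
      rw [I_sq]; ring
    · have : (2*I*l - 1)^(m+1) - (-(2*I*l) - 1)^(m+1)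
          = (2*I*l) * ((2*I*l - 1)^m + (-(2*I*l) - 1)^m)
            - ((2*I*l - 1)^m - (-(2*I*l) - 1)^m) := by ring
      rw [this, h1, h2, sd]
      simp only [eval_sub, eval_neg, eval_mul, eval_C, eval_X]
      ring

lemma sd_natDegree (m : ℕ) :
    ((sd m).1).natDegree ≤ m/2 ∧ ((sd m).2).natDegree ≤ (m-1)/2 := by
  induction m with
  | zero => simp [sd]
  | succ m ih =>
    obtain ⟨h1, h2⟩ := ih
    constructor
    · rw [sd]
      refine (natDegree_sub_le _ _).trans ?_
      simp only [natDegree_neg]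
      refine max_le (h1.trans (Nat.div_le_div_right (Nat.le_succ m))) ?_
      match m, h2 with
      | 0, _ => simp [sd]
      | (m+1), h2 =>
        refine (natDegree_mul_le).trans ?_
        have : (C (4:ℂ) * X).natDegree ≤ 1 := by
          refine natDegree_mul_le.trans ?_; simp
        omega
    · rw [sd]
      refine (natDegree_sub_le _ _).trans ?_
      have := Nat.div_le_div_right (c := 2) (Nat.le_succ m)
      omega

end BetheAux

namespace BetheAux
open Polynomial

noncomputable def gam (A : ℂ) (m : ℕ) : Polynomial ℂ :=
  C I * (C (2*A) * (sd m).2 + (sd m).1)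

lemma gam_eval (A : ℂ) (m : ℕ) (l : ℂ) :
    l * (gam A m).eval (l^2)
      = (A + I*l) * (2*I*l - 1)^m - (A - I*l) * (-(2*I*l) - 1)^m := by
  obtain ⟨h1, h2⟩ := sd_eval m l
  rw [gam]
  simp only [eval_mul, eval_add, eval_C]
  linear_combination (-A) * h2 + (-(I*l)) * h1

lemma gam_natDegree (A : ℂ) (m : ℕ) : (gam A m).natDegree ≤ m/2 := by
  rw [gam]
  refine natDegree_mul_le.trans ?_
  simp only [natDegree_C, zero_add]
  refine (natDegree_add_le _ _).trans (max_le ?_ ((sd_natDegree m).1))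
  refine natDegree_mul_le.trans ?_
  simp only [natDegree_C, zero_add]
  exact ((sd_natDegree m).2).trans (by omega)

lemma gam_zero (A : ℂ) : gam A 0 = C (2*I) := by
  rw [gam]
  show C I * (C (2*A) * 0 + 2) = C (2*I)
  rw [mul_zero, zero_add, show (2*I) = I*2 by ring, C_mul]
  have h2 : ((2:Polynomial ℂ)) = C 2 := by
    rw [show ((2:ℂ)) = ((2:ℕ):ℂ) by norm_num, C_eq_natCast]; norm_num
  rw [h2]

noncomputable def Qpoly (A : ℂ) {m : ℕ} (lam : Fin m → ℂ) : Polynomial ℂ :=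
  ∑ T ∈ (univ : Finset (Fin m)).powerset.filter (fun T => T.Nonempty),
    gam A (T.card - 1) * ∏ k ∈ univ \ T, (X - C (lam k ^ 2))

lemma Qpoly_term_natDegree (A : ℂ) {m : ℕ} (lam : Fin m → ℂ) (T : Finset (Fin m))
    (hT : T.Nonempty) :
    (gam A (T.card - 1) * ∏ k ∈ univ \ T, (X - C (lam k ^ 2))).natDegree
      ≤ (T.card - 1)/2 + (m - T.card) := by
  refine natDegree_mul_le.trans ?_
  gcongr
  · exact gam_natDegree A _
  · have hmonic : ∀ k ∈ (univ : Finset (Fin m)) \ T, (X - C (lam k ^ 2)).Monic :=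
      fun k _ => monic_X_sub_C _
    rw [natDegree_prod_of_monic _ _ hmonic]
    simp only [natDegree_X_sub_C, Finset.sum_const, smul_eq_mul, mul_one]
    rw [Finset.card_sdiff_of_subset (Finset.subset_univ T), Finset.card_univ, Fintype.card_fin]

lemma Qpoly_natDegree (A : ℂ) {m : ℕ} (lam : Fin m → ℂ) (hm : 1 ≤ m) :
    (Qpoly A lam).natDegree ≤ m - 1 := by
  refine natDegree_sum_le_of_forall_le _ _ ?_
  intro T hT
  simp only [Finset.mem_filter, Finset.mem_powerset] at hT
  refine (Qpoly_term_natDegree A lam T hT.2).trans ?_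
  have h1 : 1 ≤ T.card := Finset.Nonempty.card_pos hT.2
  have h2 : T.card ≤ m := by
    have := Finset.card_le_card hT.1
    simpa using this
  omega

lemma Qpoly_degree_lt (A : ℂ) {m : ℕ} (lam : Fin m → ℂ) (hm : 1 ≤ m) :
    (Qpoly A lam).degree < (m : ℕ) := by
  refine (degree_le_natDegree).trans_lt ?_
  have := Qpoly_natDegree A lam hm
  exact_mod_cast lt_of_le_of_lt (Nat.cast_le.mpr this) (Nat.cast_lt.mpr (by omega))

lemma Qpoly_coeff (A : ℂ) {m : ℕ} (lam : Fin m → ℂ) :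
    (Qpoly A lam).coeff (m - 1) = 2*I*m := by
  rw [Qpoly, finset_sum_coeff]
  have key : ∀ T ∈ (univ : Finset (Fin m)).powerset.filter (fun T => T.Nonempty),
      (gam A (T.card - 1) * ∏ k ∈ univ \ T, (X - C (lam k ^ 2))).coeff (m-1)
        = if T.card = 1 then 2*I else 0 := by
    intro T hT
    simp only [Finset.mem_filter, Finset.mem_powerset] at hT
    by_cases hc : T.card = 1
    · rw [if_pos hc, hc, gam_zero]
      obtain ⟨j, rfl⟩ := Finset.card_eq_one.mp hc
      have hmonic : (((univ : Finset (Fin m)) \ {j}).prod (fun k => X - C (lam k ^ 2))).Monic :=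
        monic_prod_of_monic _ _ (fun k _ => monic_X_sub_C _)
      have hdeg : (((univ : Finset (Fin m)) \ {j}).prod (fun k => X - C (lam k ^ 2))).natDegree
          = m - 1 := by
        rw [natDegree_prod_of_monic _ _ (fun k _ => monic_X_sub_C _)]
        simp only [natDegree_X_sub_C, Finset.sum_const, smul_eq_mul, mul_one]
        rw [Finset.card_sdiff_of_subset (Finset.subset_univ _), Finset.card_univ, Fintype.card_fin,
          Finset.card_singleton]
      rw [coeff_C_mul, ← hdeg, hmonic.coeff_natDegree, mul_one]
    · rw [if_neg hc]
      have h1 : 1 ≤ T.card := Finset.Nonempty.card_pos hT.2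
      have h2 : T.card ≤ m := by simpa using Finset.card_le_card hT.1
      refine coeff_eq_zero_of_natDegree_lt ?_
      refine lt_of_le_of_lt (Qpoly_term_natDegree A lam T hT.2) ?_
      omega
  rw [Finset.sum_congr rfl key, ← Finset.sum_filter]
  rw [Finset.filter_filter]
  have hset : (univ : Finset (Fin m)).powerset.filter (fun T => T.Nonempty ∧ T.card = 1)
      = (univ : Finset (Fin m)).powersetCard 1 := by
    rw [Finset.powersetCard_eq_filter]
    apply Finset.filter_congr
    intro T _
    simp only [iff_iff_implies_and_implies, and_imp]
    constructor
    · exact fun _ h => h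
    · intro h; exact ⟨Finset.card_pos.mp (by omega), h⟩
  rw [hset, Finset.sum_const, Finset.card_powersetCard, Finset.card_univ, Fintype.card_fin]
  simp only [Nat.choose_one_right, nsmul_eq_mul]
  ring

end BetheAux

namespace BetheAux
open Polynomial

lemma lagrange_coeff_sum {m : ℕ} (x : Fin m → ℂ) (hx : Function.Injective x)
    (f : Polynomial ℂ) (hf : f.degree < (m : ℕ)) :
    ∑ j, f.eval (x j) * (∏ k ∈ univ.erase j, (x j - x k))⁻¹ = f.coeff (m - 1) := by
  have hinj : Set.InjOn x (univ : Finset (Fin m)) := fun a _ b _ h => hx h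
  have hcard : ((univ : Finset (Fin m)).card : WithBot ℕ) = (m : ℕ) := by
    rw [Finset.card_univ, Fintype.card_fin]
  have hrep := Lagrange.eq_interpolate hinj (by rw [hcard]; exact hf)
  conv_rhs => rw [hrep]
  rw [Lagrange.interpolate_apply, finset_sum_coeff]
  refine Finset.sum_congr rfl ?_
  intro i _
  rw [coeff_C_mul]
  congr 1
  have hbasis : Lagrange.basis univ x i
      = C (∏ k ∈ univ.erase i, (x i - x k)⁻¹) * ∏ k ∈ univ.erase i, (X - C (x k)) := by
    rw [Lagrange.basis, map_prod, ← Finset.prod_mul_distrib]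
    rfl
  have hmon : (∏ k ∈ (univ : Finset (Fin m)).erase i, (X - C (x k))).Monic :=
    monic_prod_of_monic _ _ (fun k _ => monic_X_sub_C _)
  have hdeg : (∏ k ∈ (univ : Finset (Fin m)).erase i, (X - C (x k))).natDegree = m - 1 := by
    rw [natDegree_prod_of_monic _ _ (fun k _ => monic_X_sub_C _)]
    simp only [natDegree_X_sub_C, Finset.sum_const, smul_eq_mul, mul_one]
    rw [Finset.card_erase_of_mem (Finset.mem_univ i), Finset.card_univ, Fintype.card_fin]
  rw [hbasis, coeff_C_mul, ← hdeg, hmon.coeff_natDegree, mul_one, ← Finset.prod_inv_distrib]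

noncomputable def hh (A a : ℂ) {m : ℕ} (lam : Fin m → ℂ) (s : Finset (Fin m)) : ℂ :=
  (A + I*a) * ∏ k ∈ s, ((a+I)^2 - lam k^2) - (A - I*a) * ∏ k ∈ s, ((a-I)^2 - lam k^2)

lemma hh_eq (A : ℂ) {m : ℕ} (lam : Fin m → ℂ) (j : Fin m) :
    hh A (lam j) lam (univ.erase j) = lam j * (Qpoly A lam).eval (lam j ^ 2) := by
  classical
  set a := lam j with ha
  -- expand lhs into a sum over subsets of univ.erase j
  have hplus : ∀ k : Fin m, (a+I)^2 - lam k^2 = (2*I*a - 1) + (lam j^2 - lam k^2) := by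
    intro k; rw [ha]; linear_combination I_sq
  have hminus : ∀ k : Fin m, (a-I)^2 - lam k^2 = (-(2*I*a) - 1) + (lam j^2 - lam k^2) := by
    intro k; rw [ha]; linear_combination I_sq
  have lhs_eq : hh A a lam (univ.erase j)
      = ∑ t ∈ (univ.erase j).powerset,
          (lam j * (gam A t.card).eval (lam j ^ 2)) *
            ∏ k ∈ (univ.erase j) \ t, (lam j^2 - lam k^2) := by
    rw [hh, Finset.prod_congr rfl (fun k _ => hplus k),
      Finset.prod_congr rfl (fun k _ => hminus k), Finset.prod_add, Finset.prod_add,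
      Finset.mul_sum, Finset.mul_sum, ← Finset.sum_sub_distrib]
    refine Finset.sum_congr rfl ?_
    intro t _
    rw [Finset.prod_const, Finset.prod_const, gam_eval]
    ring
  rw [lhs_eq]
  -- expand rhs
  rw [Qpoly, eval_finset_sum, Finset.mul_sum]
  have rhs_term : ∀ T : Finset (Fin m),
      lam j * eval (lam j ^ 2) (gam A (T.card - 1) * ∏ k ∈ univ \ T, (X - C (lam k ^ 2)))
        = (lam j * (gam A (T.card - 1)).eval (lam j ^ 2)) *
            ∏ k ∈ univ \ T, (lam j ^ 2 - lam k ^ 2) := by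
    intro T
    rw [eval_mul, eval_prod]
    simp only [eval_sub, eval_X, eval_C]
    ring
  rw [Finset.sum_congr rfl (fun T _ => rhs_term T)]
  -- restrict rhs sum to sets containing j
  rw [← Finset.sum_filter_of_ne (s := (univ : Finset (Fin m)).powerset.filter (fun T => T.Nonempty)) (p := fun T => j ∈ T) ?side]
  case side =>
    intro T hT hne
    by_contra hj
    simp only [Finset.mem_filter, Finset.mem_powerset] at hT
    exact hne (by
      have : lam j ^ 2 - lam j ^ 2 = 0 := sub_self _
      rw [Finset.prod_eq_zero (Finset.mem_sdiff.mpr ⟨Finset.mem_univ j, hj⟩) this, mul_zero])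
  -- now a bijection between subsets of erase j and sets containing j
  refine Finset.sum_bij' (fun t _ => insert j t) (fun T _ => T.erase j) ?_ ?_ ?_ ?_ ?_
  · intro t ht
    simp only [Finset.mem_powerset] at ht
    simp only [Finset.mem_filter, Finset.mem_powerset]
    exact ⟨⟨Finset.insert_subset_iff.mpr ⟨Finset.mem_univ j, ht.trans (Finset.erase_subset _ _)⟩,
      Finset.insert_nonempty _ _⟩, Finset.mem_insert_self _ _⟩
  · intro T hT
    simp only [Finset.mem_filter, Finset.mem_powerset] at hT
    simp only [Finset.mem_powerset]
    exact Finset.erase_subset_erase _ hT.1.1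
  · intro t ht
    simp only [Finset.mem_powerset] at ht
    have hjt : j ∉ t := fun h => (Finset.mem_erase.mp (ht h)).1 rfl
    show (insert j t).erase j = t
    rw [Finset.erase_insert hjt]
  · intro T hT
    simp only [Finset.mem_filter, Finset.mem_powerset] at hT
    show insert j (T.erase j) = T
    rw [Finset.insert_erase hT.2]
  · intro t ht
    simp only [Finset.mem_powerset] at ht
    have hjt : j ∉ t := fun h => (Finset.mem_erase.mp (ht h)).1 rfl
    have hcard : (insert j t).card - 1 = t.card := by
      rw [Finset.card_insert_of_notMem hjt]; omega
    have hset : univ \ insert j t = (univ.erase j) \ t := by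
      ext k
      simp only [Finset.mem_sdiff, Finset.mem_univ, true_and, Finset.mem_insert,
        Finset.mem_erase, not_or]
      tauto
    rw [hcard, hset]
end BetheAux

namespace BetheAux
open Polynomial

lemma Kkey {m : ℕ} (A : ℂ) (lam : Fin m → ℂ)
    (hll : ∀ k l, k ≠ l → lam k ^ 2 ≠ lam l ^ 2) :
    ∑ j, (∏ k ∈ univ.erase j, (lam j^2 - lam k^2))⁻¹
        * (hh A (lam j) lam (univ.erase j) * ∏ k ∈ univ.erase j, lam k)
      = 2*I*m * ∏ k, lam k := by
  obtain rfl | hm := Nat.eq_zero_or_pos m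
  · simp
  have hxinj : Function.Injective (fun j => lam j ^ 2) := by
    intro a b h
    by_contra hne
    exact hll a b hne h
  have step : ∀ j : Fin m,
      (∏ k ∈ univ.erase j, (lam j^2 - lam k^2))⁻¹
        * (hh A (lam j) lam (univ.erase j) * ∏ k ∈ univ.erase j, lam k)
      = (∏ k, lam k) * ((Qpoly A lam).eval (lam j ^ 2)
          * (∏ k ∈ univ.erase j, (lam j^2 - lam k^2))⁻¹) := by
    intro j
    rw [hh_eq, ← Finset.mul_prod_erase univ lam (Finset.mem_univ j)]
    ring
  rw [Finset.sum_congr rfl (fun j _ => step j), ← Finset.mul_sum]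
  rw [lagrange_coeff_sum (fun j => lam j ^ 2) hxinj (Qpoly A lam) (Qpoly_degree_lt A lam hm)]
  rw [Qpoly_coeff]
  ring

end BetheAux

namespace BetheAux

lemma filter_succ_lt (n : ℕ) (j : Fin n) :
    (univ : Finset (Fin (n+1))).filter (fun k => j.succ < k)
      = (univ.filter (fun k => j < k)).map (Fin.succEmb n) := by
  ext k
  simp only [Finset.mem_filter, Finset.mem_univ, true_and, Finset.mem_map]
  constructor
  · intro hk
    have hk0 : k ≠ 0 := by
      intro h; rw [h] at hk; exact (Fin.not_lt_zero _) hk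
    obtain ⟨k', rfl⟩ := Fin.exists_succ_eq.mpr hk0
    exact ⟨k', by simpa [Finset.mem_filter, Fin.succ_lt_succ_iff] using hk, rfl⟩
  · rintro ⟨k', hk', rfl⟩
    simpa [Fin.succ_lt_succ_iff] using hk'

lemma filter_zero_lt (n : ℕ) :
    (univ : Finset (Fin (n+1))).filter (fun k => 0 < k) = univ.map (Fin.succEmb n) := by
  ext k
  simp only [Finset.mem_filter, Finset.mem_univ, true_and, Finset.mem_map]
  constructor
  · intro hk
    have hk0 : k ≠ 0 := Fin.pos_iff_ne_zero.mp hk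
    obtain ⟨k', rfl⟩ := Fin.exists_succ_eq.mpr hk0
    exact ⟨k', rfl⟩
  · rintro ⟨k', _, rfl⟩
    exact Fin.succ_pos k'

lemma image_swap_succ (n : ℕ) (i : Fin (n+1)) :
    (univ : Finset (Fin n)).image (fun x => Equiv.swap 0 i x.succ) = univ.erase i := by
  have hinj : Function.Injective (fun x : Fin n => Equiv.swap 0 i x.succ) :=
    fun a b h => Fin.succ_injective n (Equiv.injective _ h)
  apply Finset.eq_of_subset_of_card_le
  · intro k hk
    simp only [Finset.mem_image] at hk
    obtain ⟨x, _, rfl⟩ := hk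
    refine Finset.mem_erase.mpr ⟨?_, Finset.mem_univ _⟩
    intro h
    have h2 : x.succ = Equiv.swap 0 i i := by
      have := congrArg (Equiv.swap 0 i) h
      rwa [Equiv.swap_apply_self] at this
    rw [Equiv.swap_apply_right] at h2
    exact Fin.succ_ne_zero x h2
  · rw [Finset.card_erase_of_mem (Finset.mem_univ i), Finset.card_univ, Fintype.card_fin,
      Finset.card_image_of_injective _ hinj, Finset.card_univ, Fintype.card_fin]
    omega

end BetheAux

namespace BetheAux

noncomputable def TT (A : ℂ) {m : ℕ} (lam : Fin m → ℂ) (P : Equiv.Perm (Fin m)) : ℂ :=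
  ∏ l : Fin m,
    ((∏ k ∈ univ.filter (fun k => l < k), (lam (P l)^2 - lam (P k)^2))⁻¹ *
      ((A + I * lam (P l)) *
          (∏ k ∈ univ.filter (fun k => l < k), ((lam (P l) + I)^2 - lam (P k)^2))
       - (A - I * lam (P l)) *
          ∏ k ∈ univ.filter (fun k => l < k), ((lam (P l) - I)^2 - lam (P k)^2)))

lemma TT_decompose (A : ℂ) {m : ℕ} (lam : Fin (m+1) → ℂ) (i : Fin (m+1))
    (σ : Equiv.Perm (Fin m)) :
    TT A lam (Equiv.Perm.decomposeFin.symm (i, σ))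
      = ((∏ k ∈ univ.erase i, (lam i^2 - lam k^2))⁻¹
          * hh A (lam i) lam (univ.erase i))
        * TT A (fun x => lam (Equiv.swap 0 i x.succ)) σ := by
  set emb : Fin m → Fin (m+1) := fun x => Equiv.swap 0 i x.succ with hemb
  have hinj : Function.Injective emb :=
    fun a b h => Fin.succ_injective m (Equiv.injective _ h)
  set P := Equiv.Perm.decomposeFin.symm (i, σ) with hP
  have hP0 : P 0 = i := Equiv.Perm.decomposeFin_symm_apply_zero i σ
  have hPs : ∀ x : Fin m, P x.succ = emb (σ x) := by
    intro x
    rw [hP, hemb]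
    exact Equiv.Perm.decomposeFin_symm_apply_succ σ i x
  rw [TT, Fin.prod_univ_succ]
  congr 1
  · -- the l = 0 factor
    rw [hP0, filter_zero_lt]
    have key : ∀ F : ℂ → ℂ,
        ∏ k ∈ univ.map (Fin.succEmb m), F (lam (P k)) = ∏ k ∈ univ.erase i, F (lam k) := by
      intro F
      rw [Finset.prod_map]
      have h1 : ∀ x : Fin m, F (lam (P ((Fin.succEmb m) x))) = F (lam (emb (σ x))) :=
        fun x => by rw [show ((Fin.succEmb m) x) = x.succ from rfl, hPs]
      rw [Finset.prod_congr rfl (fun x _ => h1 x),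
        Equiv.prod_comp σ (fun x => F (lam (emb x))),
        ← image_swap_succ m i, Finset.prod_image (fun a _ b _ h => hinj h)]
    rw [key (fun t => lam i^2 - t^2), key (fun t => (lam i + I)^2 - t^2),
      key (fun t => (lam i - I)^2 - t^2)]
    rfl
  · -- the successor factors
    refine Finset.prod_congr rfl ?_
    intro j _
    rw [hPs j, filter_succ_lt]
    simp only [Finset.prod_map]
    have hcoe : ∀ k : Fin m, (Fin.succEmb m) k = k.succ := fun _ => rfl
    congr 1
    · congr 1
      refine Finset.prod_congr rfl ?_
      intro k _
      rw [hcoe, hPs k]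
    · congr 2
      · refine Finset.prod_congr rfl ?_
        intro k _
        rw [hcoe, hPs k]
      · refine Finset.prod_congr rfl ?_
        intro k _
        rw [hcoe, hPs k]

end BetheAux

namespace BetheAux

lemma main_sum (A : ℂ) : ∀ (m : ℕ) (lam : Fin m → ℂ),
    (∀ k l, k ≠ l → lam k^2 ≠ lam l^2) →
    ∑ P : Equiv.Perm (Fin m), TT A lam P
      = (2*I)^m * (m.factorial : ℂ) * ∏ k, lam k := by
  intro m
  induction m with
  | zero =>
    intro lam _
    have h1 : ∀ P : Equiv.Perm (Fin 0), TT A lam P = 1 := fun P => by simp [TT]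
    rw [Finset.sum_congr rfl (fun P _ => h1 P)]
    simp [Finset.card_univ, Fintype.card_perm]
  | succ m ih =>
    intro lam hll
    rw [← Equiv.sum_comp (Equiv.Perm.decomposeFin.symm) (fun P => TT A lam P),
      Fintype.sum_prod_type]
    have step1 : ∀ i : Fin (m+1),
        ∑ σ : Equiv.Perm (Fin m), TT A lam (Equiv.Perm.decomposeFin.symm (i, σ))
          = ((∏ k ∈ univ.erase i, (lam i^2 - lam k^2))⁻¹
              * hh A (lam i) lam (univ.erase i))
            * ((2*I)^m * (m.factorial : ℂ) * ∏ k ∈ univ.erase i, lam k) := by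
      intro i
      have hinj : Function.Injective (fun x : Fin m => Equiv.swap 0 i x.succ) :=
        fun a b h => Fin.succ_injective m (Equiv.injective _ h)
      have hll' : ∀ k l : Fin m, k ≠ l →
          (lam (Equiv.swap 0 i k.succ))^2 ≠ (lam (Equiv.swap 0 i l.succ))^2 :=
        fun k l hkl => hll _ _ (fun h => hkl (hinj h))
      rw [Finset.sum_congr rfl (fun σ _ => TT_decompose A lam i σ), ← Finset.mul_sum,
        ih _ hll']
      congr 2
      rw [← image_swap_succ m i, Finset.prod_image (fun a _ b _ h => hinj h)]
    rw [Finset.sum_congr rfl (fun i _ => step1 i)]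
    have step2 : ∀ i : Fin (m+1),
        ((∏ k ∈ univ.erase i, (lam i^2 - lam k^2))⁻¹
            * hh A (lam i) lam (univ.erase i))
          * ((2*I)^m * (m.factorial : ℂ) * ∏ k ∈ univ.erase i, lam k)
        = ((2*I)^m * (m.factorial : ℂ)) *
            ((∏ k ∈ univ.erase i, (lam i^2 - lam k^2))⁻¹
              * (hh A (lam i) lam (univ.erase i) * ∏ k ∈ univ.erase i, lam k)) := by
      intro i; ring
    rw [Finset.sum_congr rfl (fun i _ => step2 i), ← Finset.mul_sum, Kkey A lam hll]
    rw [Nat.factorial_succ]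
    push_cast
    ring

end BetheAux

namespace BetheAux

lemma pmSign_mul_sq (b : Bool) (x : ℂ) : (pmSign b * x)^2 = x^2 := by
  cases b <;> simp [pmSign] <;> ring

lemma pairProd {n : ℕ} (f : Fin n × Fin n → ℂ) :
    ∏ p ∈ univ.filter (fun p : Fin n × Fin n => p.1 < p.2), f p
      = ∏ l, ∏ k ∈ univ.filter (fun k => k < l), f (k, l) := by
  rw [Finset.prod_filter]
  have huniv : (univ : Finset (Fin n × Fin n)) = univ ×ˢ univ := rfl
  rw [huniv, Finset.prod_product_right]
  refine Finset.prod_congr rfl ?_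
  intro l _
  rw [Finset.prod_filter]

lemma betheAmp_eq {n : ℕ} (A : ℂ) (hA : A ≠ 0) (μ : Fin n → ℂ)
    (h : ∀ p : Fin n × Fin n, p.1 < p.2 → (μ p.2)^2 ≠ (μ p.1)^2) :
    betheAmp A μ
      = (∏ p ∈ univ.filter (fun p : Fin n × Fin n => p.1 < p.2),
          (((μ p.2 + I)^2 - (μ p.1)^2) * ((μ p.2)^2 - (μ p.1)^2)⁻¹)) *
        ∏ l : Fin n, ((A + I * μ l) * A⁻¹) := by
  rw [betheAmp]
  congr 1
  · refine Finset.prod_congr rfl ?_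
    intro p hp
    simp only [Finset.mem_filter] at hp
    have hsq : (μ p.2)^2 - (μ p.1)^2 ≠ 0 := sub_ne_zero_of_ne (h p hp.2)
    have h1 : μ p.2 - μ p.1 ≠ 0 := by
      intro hz
      exact hsq (by rw [sub_eq_zero.mp hz]; ring)
    have h2 : μ p.2 + μ p.1 ≠ 0 := by
      intro hz
      apply hsq
      have : μ p.2 = -μ p.1 := by linear_combination hz
      rw [this]; ring
    field_simp
    ring
  · refine Finset.prod_congr rfl ?_
    intro l _
    field_simp

end BetheAux

namespace BetheAux

lemma inner_sum {n : ℕ} (A : ℂ) (hA : A ≠ 0) (lam : Fin n → ℂ)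
    (hll : ∀ k l, k ≠ l → lam k ^ 2 ≠ lam l ^ 2) (P : Equiv.Perm (Fin n)) :
    ∑ ε : Fin n → Bool,
        (∏ p : Fin n, pmSign (ε p)) * betheAmp A (fun p => pmSign (ε p) * lam (P p))
      = (A⁻¹)^n * ∏ l,
          ((∏ k ∈ univ.filter (fun k => k < l), (lam (P l)^2 - lam (P k)^2))⁻¹ *
            ((A + I * lam (P l)) *
                (∏ k ∈ univ.filter (fun k => k < l), ((lam (P l) + I)^2 - lam (P k)^2))
             - (A - I * lam (P l)) *
                ∏ k ∈ univ.filter (fun k => k < l), ((lam (P l) - I)^2 - lam (P k)^2))) := by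
  classical
  set f : (l : Fin n) → Bool → ℂ := fun l b =>
    pmSign b * ((∏ k ∈ univ.filter (fun k => k < l),
        (((pmSign b * lam (P l) + I)^2 - lam (P k)^2) * (lam (P l)^2 - lam (P k)^2)⁻¹)) *
      ((A + I * (pmSign b * lam (P l))) * A⁻¹)) with hf
  have stepA : ∀ ε : Fin n → Bool,
      (∏ p : Fin n, pmSign (ε p)) * betheAmp A (fun p => pmSign (ε p) * lam (P p))
        = ∏ l, f l (ε l) := by
    intro ε
    have hd : ∀ p : Fin n × Fin n, p.1 < p.2 →
        ((fun p => pmSign (ε p) * lam (P p)) p.2)^2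
          ≠ ((fun p => pmSign (ε p) * lam (P p)) p.1)^2 := by
      intro p hp
      simp only [pmSign_mul_sq]
      exact hll _ _ (fun hc => (ne_of_gt hp) (P.injective hc))
    rw [betheAmp_eq A hA _ hd]
    simp only [pmSign_mul_sq]
    rw [pairProd (fun p => ((pmSign (ε p.2) * lam (P p.2) + I)^2 - lam (P p.1)^2)
        * (lam (P p.2)^2 - lam (P p.1)^2)⁻¹)]
    rw [← Finset.prod_mul_distrib, ← Finset.prod_mul_distrib]
  rw [Finset.sum_congr rfl (fun ε _ => stepA ε)]
  have stepB : ∑ ε : Fin n → Bool, ∏ l, f l (ε l) = ∏ l, (f l true + f l false) := by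
    rw [← Fintype.piFinset_univ, ← Finset.prod_univ_sum]
    refine Finset.prod_congr rfl ?_
    intro l _
    simp
  rw [stepB]
  have perl : ∀ l : Fin n, f l true + f l false
      = A⁻¹ * ((∏ k ∈ univ.filter (fun k => k < l), (lam (P l)^2 - lam (P k)^2))⁻¹ *
          ((A + I * lam (P l)) *
              (∏ k ∈ univ.filter (fun k => k < l), ((lam (P l) + I)^2 - lam (P k)^2))
           - (A - I * lam (P l)) *
              ∏ k ∈ univ.filter (fun k => k < l), ((lam (P l) - I)^2 - lam (P k)^2))) := by
    intro l
    rw [hf]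
    simp only [pmSign, if_true, if_false, Bool.false_eq_true, ite_true, ite_false]
    rw [Finset.prod_mul_distrib, Finset.prod_mul_distrib, Finset.prod_inv_distrib]
    have hneg : ∏ k ∈ univ.filter (fun k => k < l), ((-1 * lam (P l) + I)^2 - lam (P k)^2)
        = ∏ k ∈ univ.filter (fun k => k < l), ((lam (P l) - I)^2 - lam (P k)^2) :=
      Finset.prod_congr rfl (fun k _ => by ring)
    have hpos : ∏ k ∈ univ.filter (fun k => k < l), ((1 * lam (P l) + I)^2 - lam (P k)^2)
        = ∏ k ∈ univ.filter (fun k => k < l), ((lam (P l) + I)^2 - lam (P k)^2) :=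
      Finset.prod_congr rfl (fun k _ => by ring)
    rw [hneg, hpos]
    ring
  rw [Finset.prod_congr rfl (fun l _ => perl l), Finset.prod_mul_distrib,
    Finset.prod_const, Finset.card_univ, Fintype.card_fin]

end BetheAux

namespace BetheAux

noncomputable def prefixF (A : ℂ) {n : ℕ} (lam : Fin n → ℂ) (P : Equiv.Perm (Fin n)) : ℂ :=
  ∏ l : Fin n,
    ((∏ k ∈ univ.filter (fun k => k < l), (lam (P l)^2 - lam (P k)^2))⁻¹ *
      ((A + I * lam (P l)) *
          (∏ k ∈ univ.filter (fun k => k < l), ((lam (P l) + I)^2 - lam (P k)^2))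
       - (A - I * lam (P l)) *
          ∏ k ∈ univ.filter (fun k => k < l), ((lam (P l) - I)^2 - lam (P k)^2)))

def revEmb (n : ℕ) : Fin n ↪ Fin n := ⟨Fin.rev, Fin.rev_injective⟩

lemma filter_lt_rev {n : ℕ} (l : Fin n) :
    univ.filter (fun k => k < Fin.rev l) = (univ.filter (fun k => l < k)).map (revEmb n) := by
  ext k
  simp only [Finset.mem_filter, Finset.mem_univ, true_and, Finset.mem_map, revEmb,
    Function.Embedding.coeFn_mk]
  constructor
  · intro hk
    exact ⟨Fin.rev k, by rwa [← Fin.lt_rev_iff], Fin.rev_rev k⟩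
  · rintro ⟨k', hk', rfl⟩
    rwa [Fin.lt_rev_iff, Fin.rev_rev]

lemma prefixF_rev (A : ℂ) {n : ℕ} (lam : Fin n → ℂ) (P : Equiv.Perm (Fin n)) :
    prefixF A lam (P * Fin.revPerm) = TT A lam P := by
  rw [prefixF, TT, ← Equiv.prod_comp (Fin.revPerm : Equiv.Perm (Fin n))]
  refine Finset.prod_congr rfl ?_
  intro l _
  have hQl : (P * (Fin.revPerm : Equiv.Perm (Fin n))) (Fin.rev l) = P l := by
    simp [Equiv.Perm.mul_apply, Fin.rev_rev]
  have hrev : ∀ F : ℂ → ℂ,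
      ∏ k ∈ univ.filter (fun k => k < Fin.rev l), F (lam ((P * (Fin.revPerm : Equiv.Perm (Fin n))) k))
        = ∏ k ∈ univ.filter (fun k => l < k), F (lam (P k)) := by
    intro F
    rw [filter_lt_rev, Finset.prod_map]
    refine Finset.prod_congr rfl ?_
    intro k _
    simp [revEmb, Equiv.Perm.mul_apply, Fin.rev_rev]
  simp only [show ∀ x : Fin n, (Fin.revPerm : Equiv.Perm (Fin n)) x = Fin.rev x from fun _ => rfl]
  rw [hQl, hrev (fun t => lam (P l)^2 - t^2),
    hrev (fun t => (lam (P l) + I)^2 - t^2), hrev (fun t => (lam (P l) - I)^2 - t^2)]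

lemma bridge (A : ℂ) {n : ℕ} (lam : Fin n → ℂ) :
    ∑ P : Equiv.Perm (Fin n), prefixF A lam P = ∑ P : Equiv.Perm (Fin n), TT A lam P := by
  rw [← Equiv.sum_comp (Equiv.mulRight (Fin.revPerm : Equiv.Perm (Fin n)))
    (fun P => prefixF A lam P)]
  refine Finset.sum_congr rfl ?_
  intro P _
  exact prefixF_rev A lam P

end BetheAux


open BetheAux in
/-- **Evaluation of the half-space Bethe wavefunction at the boundary:**
`Ψ_μ(0,…,0) = (1/(2i)^n) Σ_{P∈S_n} Σ_{ε∈{±1}^n} (Π_p ε_p) A[ε₁λ_{P(1)},…,ε_nλ_{P(n)}]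
  = (n!/A^n) Π_j λ_j`. -/
theorem bethe_wavefunction_at_wall (n : ℕ) (hn : 1 ≤ n) (A : ℂ) (hA : A ≠ 0)
    (lam : Fin n → ℂ) (hll : ∀ k l, k ≠ l → lam k ^ 2 ≠ lam l ^ 2) :
    (1 / (2 * I) ^ n) *
      ∑ P : Equiv.Perm (Fin n), ∑ ε : Fin n → Bool,
        (∏ p : Fin n, pmSign (ε p)) *
          betheAmp A (fun p => pmSign (ε p) * lam (P p))
    = ((n.factorial : ℂ) / A ^ n) * ∏ j : Fin n, lam j := by
  rw [Finset.sum_congr rfl (fun P _ => inner_sum A hA lam hll P), ← Finset.mul_sum]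
  have hpre : ∑ P : Equiv.Perm (Fin n), ∏ l,
          ((∏ k ∈ univ.filter (fun k => k < l), (lam (P l)^2 - lam (P k)^2))⁻¹ *
            ((A + I * lam (P l)) *
                (∏ k ∈ univ.filter (fun k => k < l), ((lam (P l) + I)^2 - lam (P k)^2))
             - (A - I * lam (P l)) *
                ∏ k ∈ univ.filter (fun k => k < l), ((lam (P l) - I)^2 - lam (P k)^2)))
      = ∑ P : Equiv.Perm (Fin n), prefixF A lam P := rfl
  rw [hpre, bridge, main_sum A n lam hll]
  have h2I : (2 * I) ≠ 0 := by simp [I_ne_zero]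
  have h2In : (2 * I)^n ≠ 0 := pow_ne_zero _ h2I
  have hAn : A^n ≠ 0 := pow_ne_zero _ hA
  field_simp
  rw [mul_comm, ← mul_assoc, ← mul_assoc, ← mul_pow, mul_one_div_cancel hA, one_pow, one_mul]
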